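/- Let H = conv{(cos(kπ/3), sin(kπ/3)) : k = 0,…,5} be the unit hexagon, decomposed into the three unit rhombuses P₁ = conv{(0,0), (1,0), (1/2,√3/2), (−1/2,√3/2)}, P₂ = conv{(0,0), (−1/2,√3/2), (−1,0), (−1/2,−√3/2)}, P₃ = conv{(0,0), (−1/2,−√3/2), (1/2,−√3/2), (1,0)}. For independent P, Q each uniform in H, for independent P', Q' each uniform in P₁, and for independent P'' uniform in P₁ and Q'' uniform in P₂, the following mixture identity holds for every d ∈ ℝ: Prob(‖P − Q‖ ≤ d) = (1/3)·Prob(‖P' − Q'‖ ≤ d) + (2/3)·Prob(‖P'' − Q''‖ ≤ d). -/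

import Mathlib

open MeasureTheory Real Set

noncomputable section

abbrev E2 := EuclideanSpace ℝ (Fin 2)

def pt (a b : ℝ) : E2 := WithLp.toLp 2 ![a, b]

/-- The uniform probability measure on a set `K ⊆ ℝ²`: normalized restricted Lebesgue measure. -/
def unif (K : Set E2) : Measure E2 := (volume K)⁻¹ • volume.restrict K

/-- The unit hexagon: convex hull of the six points (cos(kπ/3), sin(kπ/3)). -/
def hexa : Set E2 :=
  convexHull ℝ (Set.range fun k : Fin 6 => pt (Real.cos (k * π / 3)) (Real.sin (k * π / 3)))

/-- P₁ = conv{(0,0), (1,0), (1/2,√3/2), (−1/2,√3/2)}. -/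
def P1 : Set E2 :=
  convexHull ℝ {pt 0 0, pt 1 0, pt (1/2) (Real.sqrt 3 / 2), pt (-(1/2)) (Real.sqrt 3 / 2)}

/-- P₂ = conv{(0,0), (−1/2,√3/2), (−1,0), (−1/2,−√3/2)}. -/
def P2 : Set E2 :=
  convexHull ℝ {pt 0 0, pt (-(1/2)) (Real.sqrt 3 / 2), pt (-1) 0,
    pt (-(1/2)) (-(Real.sqrt 3 / 2))}

/-- P₃ = conv{(0,0), (−1/2,−√3/2), (1/2,−√3/2), (1,0)}. -/
def P3 : Set E2 :=
  convexHull ℝ {pt 0 0, pt (-(1/2)) (-(Real.sqrt 3 / 2)), pt (1/2) (-(Real.sqrt 3 / 2)),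
    pt 1 0}

open scoped ENNReal

set_option linter.unreachableTactic false
set_option linter.unusedTactic false

/-! ### Coordinate lemmas -/

lemma pt_apply_zero (a b : ℝ) : pt a b 0 = a := rfl
lemma pt_apply_one (a b : ℝ) : pt a b 1 = b := rfl
lemma pt_congr {a b c d : ℝ} (h1 : a = c) (h2 : b = d) : pt a b = pt c d := by rw [h1, h2]
lemma pt_zero : pt 0 0 = 0 := by ext i; fin_cases i <;> rfl
lemma pt_add (a b c d : ℝ) : pt a b + pt c d = pt (a+c) (b+d) := by
  ext i; fin_cases i <;> simp [pt_apply_zero, pt_apply_one, PiLp.add_apply]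
lemma pt_smul (s a b : ℝ) : s • pt a b = pt (s*a) (s*b) := by
  ext i; fin_cases i <;> simp [pt_apply_zero, pt_apply_one, PiLp.smul_apply]
lemma sq3 : sqrt 3 * sqrt 3 = 3 := Real.mul_self_sqrt (by norm_num)
lemma s3pos : (0:ℝ) < sqrt 3 := Real.sqrt_pos.2 (by norm_num)

/-! ### Parallelogram membership -/

lemma mem_quad {u v x : E2} {s t : ℝ} (hs0 : 0 ≤ s) (hs1 : s ≤ 1) (ht0 : 0 ≤ t) (ht1 : t ≤ 1)
    (hx : x = s • u + t • v) : x ∈ convexHull ℝ ({0, u, u + v, v} : Set E2) := by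
  set C := convexHull ℝ ({0, u, u + v, v} : Set E2) with hC
  have hconv : Convex ℝ C := convex_convexHull ℝ _
  have h0 : (0 : E2) ∈ C := subset_convexHull ℝ _ (by simp)
  have hu : u ∈ C := subset_convexHull ℝ _ (by simp)
  have huv : u + v ∈ C := subset_convexHull ℝ _ (by simp)
  have hv : v ∈ C := subset_convexHull ℝ _ (by simp)
  have ha : s • u ∈ C := by
    have := hconv h0 hu (by linarith : (0:ℝ) ≤ 1 - s) hs0 (by ring)
    simpa using this
  have hb : s • u + v ∈ C := by
    have := hconv huv hv hs0 (by linarith : (0:ℝ) ≤ 1 - s) (by ring)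
    have he : s • (u + v) + (1 - s) • v = s • u + v := by module
    rwa [he] at this
  have := hconv ha hb (by linarith : (0:ℝ) ≤ 1 - t) ht0 (by ring)
  have he : (1 - t) • (s • u) + t • (s • u + v) = s • u + t • v := by module
  rw [he] at this
  rwa [hx]

/-! ### Half planes -/

def lf (c1 c2 : ℝ) : E2 →ₗ[ℝ] ℝ where
  toFun x := c1 * x 0 + c2 * x 1
  map_add' x y := by simp [PiLp.add_apply]; ring
  map_smul' r x := by simp [PiLp.smul_apply]; ring

lemma convex_le (c1 c2 d : ℝ) : Convex ℝ {x : E2 | c1 * x 0 + c2 * x 1 ≤ d} :=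
  convex_halfSpace_le (lf c1 c2).isLinear d

lemma hull_le {S : Set E2} (c1 c2 d : ℝ) (h : ∀ z ∈ S, c1 * z 0 + c2 * z 1 ≤ d) :
    convexHull ℝ S ⊆ {x : E2 | c1 * x 0 + c2 * x 1 ≤ d} :=
  convexHull_min h (convex_le c1 c2 d)

lemma null_line (c1 c2 : ℝ) (h : c1*c1 + c2*c2 ≠ 0) :
    volume {x : E2 | c1 * x 0 + c2 * x 1 = 0} = 0 := by
  have hset : {x : E2 | c1 * x 0 + c2 * x 1 = 0} = (LinearMap.ker (lf c1 c2) : Set E2) := by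
    ext x; simp [LinearMap.mem_ker, lf]
  rw [hset]
  refine Measure.addHaar_submodule volume _ ?_
  intro htop
  apply h
  have : pt c1 c2 ∈ LinearMap.ker (lf c1 c2) := htop ▸ Submodule.mem_top
  simpa [LinearMap.mem_ker, lf, pt_apply_zero, pt_apply_one] using this

/-! ### Generators of the rhombuses -/

def u1 : E2 := pt 1 0
def v1 : E2 := pt (-(1/2)) (sqrt 3/2)
def u2 : E2 := pt (-(1/2)) (sqrt 3/2)
def v2 : E2 := pt (-(1/2)) (-(sqrt 3/2))
def u3 : E2 := pt (-(1/2)) (-(sqrt 3/2))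
def v3 : E2 := pt 1 0

lemma P1_eq : P1 = convexHull ℝ ({0, u1, u1 + v1, v1} : Set E2) := by
  rw [P1, pt_zero, show pt (1/2) (sqrt 3/2) = u1 + v1 by
    rw [u1, v1, pt_add]; exact pt_congr (by norm_num) (by norm_num)]
  rfl

lemma P2_eq : P2 = convexHull ℝ ({0, u2, u2 + v2, v2} : Set E2) := by
  rw [P2, pt_zero, show pt (-1) 0 = u2 + v2 by
    rw [u2, v2, pt_add]; exact pt_congr (by norm_num) (by norm_num)]
  rfl

lemma P3_eq : P3 = convexHull ℝ ({0, u3, u3 + v3, v3} : Set E2) := by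
  rw [P3, pt_zero, show pt (1/2) (-(sqrt 3/2)) = u3 + v3 by
    rw [u3, v3, pt_add]; exact pt_congr (by norm_num) (by norm_num)]
  rfl

/-! ### Membership criteria for the rhombuses -/

lemma memP1 {x : E2} (h1 : 0 ≤ x 1) (h2 : x 1 ≤ sqrt 3 / 2)
    (h3 : 0 ≤ sqrt 3 * x 0 + x 1) (h4 : sqrt 3 * x 0 + x 1 ≤ sqrt 3) : x ∈ P1 := by
  rw [P1_eq]
  have hne : sqrt 3 ≠ 0 := ne_of_gt s3pos
  refine mem_quad (s := (sqrt 3 * x 0 + x 1)/sqrt 3) (t := 2 * x 1 / sqrt 3)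
    (div_nonneg h3 s3pos.le) ((div_le_one s3pos).2 h4)
    (div_nonneg (by linarith) s3pos.le) ((div_le_one s3pos).2 (by linarith)) ?_
  ext i; fin_cases i
  · show x 0 = _
    simp only [PiLp.add_apply, PiLp.smul_apply, u1, v1, pt, smul_eq_mul, Fin.zero_eta, Fin.mk_one, Matrix.cons_val_zero, Matrix.cons_val_one, Matrix.head_cons, WithLp.ofLp_toLp]
    field_simp
    try first
    | ring
    | linear_combination (-(x 0)) * sq3
    | linear_combination (x 0) * sq3
    | linear_combination (2*(x 0)) * sq3
    | linear_combination (-(2*(x 0))) * sq3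
  · show x 1 = _
    simp only [PiLp.add_apply, PiLp.smul_apply, u1, v1, pt, smul_eq_mul, Fin.zero_eta, Fin.mk_one, Matrix.cons_val_zero, Matrix.cons_val_one, Matrix.head_cons, WithLp.ofLp_toLp]
    field_simp
    try first
    | ring
    | linear_combination (-(x 1)) * sq3
    | linear_combination (x 1) * sq3
    | linear_combination (2*(x 1)) * sq3
    | linear_combination (-(2*(x 1))) * sq3

lemma memP2 {x : E2} (h1 : sqrt 3 * x 0 + x 1 ≤ 0) (h2 : -(sqrt 3) ≤ sqrt 3 * x 0 + x 1)
    (h3 : sqrt 3 * x 0 - x 1 ≤ 0) (h4 : -(sqrt 3) ≤ sqrt 3 * x 0 - x 1) : x ∈ P2 := by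
  rw [P2_eq]
  have hne : sqrt 3 ≠ 0 := ne_of_gt s3pos
  refine mem_quad (s := -(sqrt 3 * x 0 - x 1)/sqrt 3) (t := -(sqrt 3 * x 0 + x 1)/sqrt 3)
    (div_nonneg (by linarith) s3pos.le) ((div_le_one s3pos).2 (by linarith))
    (div_nonneg (by linarith) s3pos.le) ((div_le_one s3pos).2 (by linarith)) ?_
  ext i; fin_cases i
  · show x 0 = _
    simp only [PiLp.add_apply, PiLp.smul_apply, u2, v2, pt, smul_eq_mul, Fin.zero_eta, Fin.mk_one, Matrix.cons_val_zero, Matrix.cons_val_one, Matrix.head_cons, WithLp.ofLp_toLp]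
    field_simp
    try first
    | ring
    | linear_combination (-(x 0)) * sq3
    | linear_combination (x 0) * sq3
    | linear_combination (2*(x 0)) * sq3
    | linear_combination (-(2*(x 0))) * sq3
  · show x 1 = _
    simp only [PiLp.add_apply, PiLp.smul_apply, u2, v2, pt, smul_eq_mul, Fin.zero_eta, Fin.mk_one, Matrix.cons_val_zero, Matrix.cons_val_one, Matrix.head_cons, WithLp.ofLp_toLp]
    field_simp
    try first
    | ring
    | linear_combination (-(x 1)) * sq3
    | linear_combination (x 1) * sq3
    | linear_combination (2*(x 1)) * sq3
    | linear_combination (-(2*(x 1))) * sq3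

lemma memP3 {x : E2} (h1 : x 1 ≤ 0) (h2 : -(sqrt 3/2) ≤ x 1)
    (h3 : 0 ≤ sqrt 3 * x 0 - x 1) (h4 : sqrt 3 * x 0 - x 1 ≤ sqrt 3) : x ∈ P3 := by
  rw [P3_eq]
  have hne : sqrt 3 ≠ 0 := ne_of_gt s3pos
  refine mem_quad (s := -(2 * x 1)/sqrt 3) (t := (sqrt 3 * x 0 - x 1)/sqrt 3)
    (div_nonneg (by linarith) s3pos.le) ((div_le_one s3pos).2 (by linarith))
    (div_nonneg h3 s3pos.le) ((div_le_one s3pos).2 h4) ?_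
  ext i; fin_cases i
  · show x 0 = _
    simp only [PiLp.add_apply, PiLp.smul_apply, u3, v3, pt, smul_eq_mul, Fin.zero_eta, Fin.mk_one, Matrix.cons_val_zero, Matrix.cons_val_one, Matrix.head_cons, WithLp.ofLp_toLp]
    field_simp
    try first
    | ring
    | linear_combination (-(x 0)) * sq3
    | linear_combination (x 0) * sq3
    | linear_combination (2*(x 0)) * sq3
    | linear_combination (-(2*(x 0))) * sq3
  · show x 1 = _
    simp only [PiLp.add_apply, PiLp.smul_apply, u3, v3, pt, smul_eq_mul, Fin.zero_eta, Fin.mk_one, Matrix.cons_val_zero, Matrix.cons_val_one, Matrix.head_cons, WithLp.ofLp_toLp]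
    field_simp
    try first
    | ring
    | linear_combination (-(x 1)) * sq3
    | linear_combination (x 1) * sq3
    | linear_combination (2*(x 1)) * sq3
    | linear_combination (-(2*(x 1))) * sq3


/-! ### Hexagon vertices -/

lemma cos1 : Real.cos ((1:ℝ) * π / 3) = 1/2 := by
  rw [show (1:ℝ)*π/3 = π/3 by ring, Real.cos_pi_div_three]
lemma sin1 : Real.sin ((1:ℝ) * π / 3) = sqrt 3/2 := by
  rw [show (1:ℝ)*π/3 = π/3 by ring, Real.sin_pi_div_three]
lemma cos2 : Real.cos ((2:ℝ) * π / 3) = -(1/2) := by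
  rw [show (2:ℝ)*π/3 = π - π/3 by ring, Real.cos_pi_sub, Real.cos_pi_div_three]
lemma sin2 : Real.sin ((2:ℝ) * π / 3) = sqrt 3/2 := by
  rw [show (2:ℝ)*π/3 = π - π/3 by ring, Real.sin_pi_sub, Real.sin_pi_div_three]
lemma cos3 : Real.cos ((3:ℝ) * π / 3) = -1 := by
  rw [show (3:ℝ)*π/3 = π by ring, Real.cos_pi]
lemma sin3 : Real.sin ((3:ℝ) * π / 3) = 0 := by
  rw [show (3:ℝ)*π/3 = π by ring, Real.sin_pi]
lemma cos4 : Real.cos ((4:ℝ) * π / 3) = -(1/2) := by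
  rw [show (4:ℝ)*π/3 = π + π/3 by ring, Real.cos_add, Real.cos_pi, Real.sin_pi,
    Real.cos_pi_div_three]
  ring
lemma sin4 : Real.sin ((4:ℝ) * π / 3) = -(sqrt 3/2) := by
  rw [show (4:ℝ)*π/3 = π + π/3 by ring, Real.sin_add, Real.cos_pi, Real.sin_pi,
    Real.sin_pi_div_three]
  ring
lemma cos5 : Real.cos ((5:ℝ) * π / 3) = 1/2 := by
  rw [show (5:ℝ)*π/3 = π + (π - π/3) by ring, Real.cos_add, Real.cos_pi, Real.sin_pi,
    Real.cos_pi_sub, Real.cos_pi_div_three]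
  ring
lemma sin5 : Real.sin ((5:ℝ) * π / 3) = -(sqrt 3/2) := by
  rw [show (5:ℝ)*π/3 = π + (π - π/3) by ring, Real.sin_add, Real.cos_pi, Real.sin_pi,
    Real.sin_pi_sub, Real.sin_pi_div_three]
  ring

lemma range_g : (Set.range fun k : Fin 6 => pt (Real.cos (k * π / 3)) (Real.sin (k * π / 3)))
    = {pt 1 0, pt (1/2) (sqrt 3/2), pt (-(1/2)) (sqrt 3/2), pt (-1) 0,
       pt (-(1/2)) (-(sqrt 3/2)), pt (1/2) (-(sqrt 3/2))} := by
  have e0 : pt (Real.cos (((0:Fin 6) : ℕ) * π / 3)) (Real.sin (((0:Fin 6) : ℕ) * π / 3))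
      = pt 1 0 := by rw [show (((0:Fin 6):ℕ):ℝ) = (0:ℝ) by norm_num [show ((0:Fin 6):ℕ) = 0 from rfl]]; exact pt_congr (by norm_num) (by norm_num)
  have e1 : pt (Real.cos (((1:Fin 6) : ℕ) * π / 3)) (Real.sin (((1:Fin 6) : ℕ) * π / 3))
      = pt (1/2) (sqrt 3/2) := by rw [show (((1:Fin 6):ℕ):ℝ) = (1:ℝ) by norm_num [show ((1:Fin 6):ℕ) = 1 from rfl]]; exact pt_congr cos1 sin1
  have e2 : pt (Real.cos (((2:Fin 6) : ℕ) * π / 3)) (Real.sin (((2:Fin 6) : ℕ) * π / 3))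
      = pt (-(1/2)) (sqrt 3/2) := by rw [show (((2:Fin 6):ℕ):ℝ) = (2:ℝ) by norm_num [show ((2:Fin 6):ℕ) = 2 from rfl]]; exact pt_congr cos2 sin2
  have e3 : pt (Real.cos (((3:Fin 6) : ℕ) * π / 3)) (Real.sin (((3:Fin 6) : ℕ) * π / 3))
      = pt (-1) 0 := by rw [show (((3:Fin 6):ℕ):ℝ) = (3:ℝ) by norm_num [show ((3:Fin 6):ℕ) = 3 from rfl]]; exact pt_congr cos3 sin3
  have e4 : pt (Real.cos (((4:Fin 6) : ℕ) * π / 3)) (Real.sin (((4:Fin 6) : ℕ) * π / 3))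
      = pt (-(1/2)) (-(sqrt 3/2)) := by rw [show (((4:Fin 6):ℕ):ℝ) = (4:ℝ) by norm_num [show ((4:Fin 6):ℕ) = 4 from rfl]]; exact pt_congr cos4 sin4
  have e5 : pt (Real.cos (((5:Fin 6) : ℕ) * π / 3)) (Real.sin (((5:Fin 6) : ℕ) * π / 3))
      = pt (1/2) (-(sqrt 3/2)) := by rw [show (((5:Fin 6):ℕ):ℝ) = (5:ℝ) by norm_num [show ((5:Fin 6):ℕ) = 5 from rfl]]; exact pt_congr cos5 sin5
  apply Set.Subset.antisymm
  · rintro z ⟨k, rfl⟩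
    fin_cases k
    · exact Or.inl e0
    · exact Or.inr (Or.inl e1)
    · exact Or.inr (Or.inr (Or.inl e2))
    · exact Or.inr (Or.inr (Or.inr (Or.inl e3)))
    · exact Or.inr (Or.inr (Or.inr (Or.inr (Or.inl e4))))
    · exact Or.inr (Or.inr (Or.inr (Or.inr (Or.inr e5))))
  · rintro z (rfl|rfl|rfl|rfl|rfl|rfl)
    exacts [⟨0, e0⟩, ⟨1, e1⟩, ⟨2, e2⟩, ⟨3, e3⟩, ⟨4, e4⟩, ⟨5, e5⟩]

lemma hexa_eq : hexa = convexHull ℝ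
    ({pt 1 0, pt (1/2) (sqrt 3/2), pt (-(1/2)) (sqrt 3/2), pt (-1) 0,
      pt (-(1/2)) (-(sqrt 3/2)), pt (1/2) (-(sqrt 3/2))} : Set E2) := by
  rw [hexa, range_g]

/-! ### hexa is contained in the union of the three rhombuses -/

lemma hexa_halfplane (c1 c2 d : ℝ)
    (h : ∀ z ∈ ({pt 1 0, pt (1/2) (sqrt 3/2), pt (-(1/2)) (sqrt 3/2), pt (-1) 0,
      pt (-(1/2)) (-(sqrt 3/2)), pt (1/2) (-(sqrt 3/2))} : Set E2),
        c1 * z 0 + c2 * z 1 ≤ d) :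
    hexa ⊆ {x : E2 | c1 * x 0 + c2 * x 1 ≤ d} := by
  rw [hexa_eq]; exact hull_le c1 c2 d h

lemma hexa_sub_union : hexa ⊆ P1 ∪ P2 ∪ P3 := by
  have s3 := s3pos
  have hy1 : hexa ⊆ {x : E2 | 0 * x 0 + 1 * x 1 ≤ sqrt 3/2} := by
    apply hexa_halfplane
    rintro z (rfl|rfl|rfl|rfl|rfl|rfl) <;>
      simp only [pt, Matrix.cons_val_zero, Matrix.cons_val_one, Matrix.head_cons, WithLp.ofLp_toLp] <;> linarith
  have hy2 : hexa ⊆ {x : E2 | 0 * x 0 + (-1) * x 1 ≤ sqrt 3/2} := by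
    apply hexa_halfplane
    rintro z (rfl|rfl|rfl|rfl|rfl|rfl) <;>
      simp only [pt, Matrix.cons_val_zero, Matrix.cons_val_one, Matrix.head_cons, WithLp.ofLp_toLp] <;> linarith
  have ha1 : hexa ⊆ {x : E2 | sqrt 3 * x 0 + 1 * x 1 ≤ sqrt 3} := by
    apply hexa_halfplane
    rintro z (rfl|rfl|rfl|rfl|rfl|rfl) <;>
      simp only [pt, Matrix.cons_val_zero, Matrix.cons_val_one, Matrix.head_cons, WithLp.ofLp_toLp] <;> nlinarith
  have ha2 : hexa ⊆ {x : E2 | -(sqrt 3) * x 0 + (-1) * x 1 ≤ sqrt 3} := by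
    apply hexa_halfplane
    rintro z (rfl|rfl|rfl|rfl|rfl|rfl) <;>
      simp only [pt, Matrix.cons_val_zero, Matrix.cons_val_one, Matrix.head_cons, WithLp.ofLp_toLp] <;> nlinarith
  have hb1 : hexa ⊆ {x : E2 | sqrt 3 * x 0 + (-1) * x 1 ≤ sqrt 3} := by
    apply hexa_halfplane
    rintro z (rfl|rfl|rfl|rfl|rfl|rfl) <;>
      simp only [pt, Matrix.cons_val_zero, Matrix.cons_val_one, Matrix.head_cons, WithLp.ofLp_toLp] <;> nlinarith
  have hb2 : hexa ⊆ {x : E2 | -(sqrt 3) * x 0 + 1 * x 1 ≤ sqrt 3} := by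
    apply hexa_halfplane
    rintro z (rfl|rfl|rfl|rfl|rfl|rfl) <;>
      simp only [pt, Matrix.cons_val_zero, Matrix.cons_val_one, Matrix.head_cons, WithLp.ofLp_toLp] <;> nlinarith
  intro x hx
  have k1 : x 1 ≤ sqrt 3/2 := by have := hy1 hx; simpa using this
  have k2 : -(sqrt 3/2) ≤ x 1 := by have := hy2 hx; simp at this; linarith
  have k3 : sqrt 3 * x 0 + x 1 ≤ sqrt 3 := by have := ha1 hx; simp at this; linarith
  have k4 : -(sqrt 3) ≤ sqrt 3 * x 0 + x 1 := by have := ha2 hx; simp at this; linarith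
  have k5 : sqrt 3 * x 0 - x 1 ≤ sqrt 3 := by have := hb1 hx; simp at this; linarith
  have k6 : -(sqrt 3) ≤ sqrt 3 * x 0 - x 1 := by have := hb2 hx; simp at this; linarith
  by_cases hy : 0 ≤ x 1
  · by_cases hP : 0 ≤ sqrt 3 * x 0 + x 1
    · exact Or.inl (Or.inl (memP1 hy k1 hP k3))
    · push_neg at hP
      exact Or.inl (Or.inr (memP2 (by linarith) k4 (by linarith) k6))
  · push_neg at hy
    by_cases hQ : 0 ≤ sqrt 3 * x 0 - x 1
    · exact Or.inr (memP3 hy.le k2 hQ k5)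
    · push_neg at hQ
      exact Or.inl (Or.inr (memP2 (by linarith) k4 (by linarith) k6))

/-! ### The union is contained in hexa -/

lemma union_sub_hexa : P1 ∪ P2 ∪ P3 ⊆ hexa := by
  rw [hexa_eq]
  have hconv : Convex ℝ (convexHull ℝ
      ({pt 1 0, pt (1/2) (sqrt 3/2), pt (-(1/2)) (sqrt 3/2), pt (-1) 0,
        pt (-(1/2)) (-(sqrt 3/2)), pt (1/2) (-(sqrt 3/2))} : Set E2)) := convex_convexHull ℝ _
  set C := convexHull ℝ
      ({pt 1 0, pt (1/2) (sqrt 3/2), pt (-(1/2)) (sqrt 3/2), pt (-1) 0,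
        pt (-(1/2)) (-(sqrt 3/2)), pt (1/2) (-(sqrt 3/2))} : Set E2) with hCdef
  have m1 : pt 1 0 ∈ C := subset_convexHull ℝ _ (by simp)
  have m2 : pt (1/2) (sqrt 3/2) ∈ C := subset_convexHull ℝ _ (by simp)
  have m3 : pt (-(1/2)) (sqrt 3/2) ∈ C := subset_convexHull ℝ _ (by simp)
  have m4 : pt (-1) 0 ∈ C := subset_convexHull ℝ _ (by simp)
  have m5 : pt (-(1/2)) (-(sqrt 3/2)) ∈ C := subset_convexHull ℝ _ (by simp)
  have m6 : pt (1/2) (-(sqrt 3/2)) ∈ C := subset_convexHull ℝ _ (by simp)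
  have m0 : pt 0 0 ∈ C := by
    have := hconv m1 m4 (by norm_num : (0:ℝ) ≤ 1/2) (by norm_num : (0:ℝ) ≤ 1/2) (by norm_num)
    rw [pt_smul, pt_smul, pt_add] at this
    convert this using 2 <;> norm_num
  rintro x ((hx | hx) | hx)
  · rw [P1] at hx
    refine convexHull_min ?_ hconv hx
    rintro z (rfl|rfl|rfl|rfl) <;> assumption
  · rw [P2] at hx
    refine convexHull_min ?_ hconv hx
    rintro z (rfl|rfl|rfl|rfl) <;> assumption
  · rw [P3] at hx
    refine convexHull_min ?_ hconv hx
    rintro z (rfl|rfl|rfl|rfl) <;> assumption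

lemma hexa_union : hexa = P1 ∪ P2 ∪ P3 :=
  Set.Subset.antisymm hexa_sub_union union_sub_hexa


/-! ### The rotation by 2π/3 -/

def rotL : E2 ≃ₗ[ℝ] E2 where
  toFun x := pt (-(x 0)/2 - sqrt 3/2 * x 1) (sqrt 3/2 * x 0 - x 1/2)
  invFun y := pt (-(y 0)/2 + sqrt 3/2 * y 1) (-(sqrt 3/2) * y 0 - y 1/2)
  map_add' x y := by
    ext i; fin_cases i <;>
      simp [pt_apply_zero, pt_apply_one, PiLp.add_apply] <;> ring
  map_smul' r x := by
    ext i; fin_cases i <;>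
      simp [pt_apply_zero, pt_apply_one, PiLp.smul_apply] <;> ring
  left_inv x := by
    ext i; fin_cases i
    · show _ = x 0
      simp [pt_apply_zero, pt_apply_one]; linear_combination (x 0 / 4) * sq3
    · show _ = x 1
      simp [pt_apply_zero, pt_apply_one]; linear_combination (x 1 / 4) * sq3
  right_inv y := by
    ext i; fin_cases i
    · show _ = y 0
      simp [pt_apply_zero, pt_apply_one]; linear_combination (y 0 / 4) * sq3
    · show _ = y 1
      simp [pt_apply_zero, pt_apply_one]; linear_combination (y 1 / 4) * sq3

lemma rotL_apply (x : E2) :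
    rotL x = pt (-(x 0)/2 - sqrt 3/2 * x 1) (sqrt 3/2 * x 0 - x 1/2) := rfl

def rot : E2 ≃ₗᵢ[ℝ] E2 :=
  { rotL with
    norm_map' := by
      intro x
      have h : ∀ y : E2, ‖y‖ = sqrt (y 0 ^ 2 + y 1 ^ 2) := by
        intro y
        rw [EuclideanSpace.norm_eq]
        congr 1
        rw [Fin.sum_univ_two]
        simp [sq_abs]
      show ‖rotL x‖ = ‖x‖
      rw [h, h, rotL_apply, pt_apply_zero, pt_apply_one]
      congr 1
      linear_combination ((x 0 ^ 2 + x 1 ^ 2)/4) * sq3 }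

lemma rot_apply (x : E2) :
    rot x = pt (-(x 0)/2 - sqrt 3/2 * x 1) (sqrt 3/2 * x 0 - x 1/2) := rfl

lemma rot_pt (a b : ℝ) :
    rot (pt a b) = pt (-a/2 - sqrt 3/2 * b) (sqrt 3/2 * a - b/2) := rfl

lemma rot_linear : IsLinearMap ℝ (rot : E2 → E2) := ⟨rot.map_add, rot.map_smul⟩

lemma rot_hull (S : Set E2) : rot '' (convexHull ℝ S) = convexHull ℝ (rot '' S) :=
  rot_linear.image_convexHull S

lemma rot_P1 : rot '' P1 = P2 := by
  rw [P1_eq, P2_eq, rot_hull]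
  congr 1
  rw [Set.image_insert_eq, Set.image_insert_eq, Set.image_insert_eq, Set.image_singleton]
  rw [show rot 0 = 0 from rot.map_zero]
  rw [show rot u1 = u2 by
    rw [u1, u2, rot_pt]; exact pt_congr (by
      norm_num
      try first
      | ring1
      | linear_combination ((1:ℝ)/2)*sq3
      | linear_combination (-(1:ℝ)/2)*sq3
      | linear_combination ((1:ℝ)/4)*sq3
      | linear_combination (-(1:ℝ)/4)*sq3
      | linarith [sq3, s3pos]) (by
      norm_num
      try first
      | ring1
      | linear_combination ((1:ℝ)/2)*sq3
      | linear_combination (-(1:ℝ)/2)*sq3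
      | linear_combination ((1:ℝ)/4)*sq3
      | linear_combination (-(1:ℝ)/4)*sq3
      | linarith [sq3, s3pos])]
  rw [show rot (u1 + v1) = u2 + v2 by
    rw [u1, v1, u2, v2, pt_add, pt_add, rot_pt]
    exact pt_congr (by
      norm_num
      try first
      | ring1
      | linear_combination ((1:ℝ)/2)*sq3
      | linear_combination (-(1:ℝ)/2)*sq3
      | linear_combination ((1:ℝ)/4)*sq3
      | linear_combination (-(1:ℝ)/4)*sq3
      | linarith [sq3, s3pos]) (by
      norm_num
      try first
      | ring1
      | linear_combination ((1:ℝ)/2)*sq3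
      | linear_combination (-(1:ℝ)/2)*sq3
      | linear_combination ((1:ℝ)/4)*sq3
      | linear_combination (-(1:ℝ)/4)*sq3
      | linarith [sq3, s3pos])]
  rw [show rot v1 = v2 by
    rw [v1, v2, rot_pt]
    exact pt_congr (by
      norm_num
      try first
      | ring1
      | linear_combination ((1:ℝ)/2)*sq3
      | linear_combination (-(1:ℝ)/2)*sq3
      | linear_combination ((1:ℝ)/4)*sq3
      | linear_combination (-(1:ℝ)/4)*sq3
      | linarith [sq3, s3pos]) (by
      norm_num
      try first
      | ring1
      | linear_combination ((1:ℝ)/2)*sq3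
      | linear_combination (-(1:ℝ)/2)*sq3
      | linear_combination ((1:ℝ)/4)*sq3
      | linear_combination (-(1:ℝ)/4)*sq3
      | linarith [sq3, s3pos])]

lemma rot_P2 : rot '' P2 = P3 := by
  rw [P2_eq, P3_eq, rot_hull]
  congr 1
  rw [Set.image_insert_eq, Set.image_insert_eq, Set.image_insert_eq, Set.image_singleton]
  rw [show rot 0 = 0 from rot.map_zero]
  rw [show rot u2 = u3 by
    rw [u2, u3, rot_pt]
    exact pt_congr (by
      norm_num
      try first
      | ring1
      | linear_combination ((1:ℝ)/2)*sq3
      | linear_combination (-(1:ℝ)/2)*sq3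
      | linear_combination ((1:ℝ)/4)*sq3
      | linear_combination (-(1:ℝ)/4)*sq3
      | linarith [sq3, s3pos]) (by
      norm_num
      try first
      | ring1
      | linear_combination ((1:ℝ)/2)*sq3
      | linear_combination (-(1:ℝ)/2)*sq3
      | linear_combination ((1:ℝ)/4)*sq3
      | linear_combination (-(1:ℝ)/4)*sq3
      | linarith [sq3, s3pos])]
  rw [show rot (u2 + v2) = u3 + v3 by
    rw [u2, v2, u3, v3, pt_add, pt_add, rot_pt]
    exact pt_congr (by
      norm_num
      try first
      | ring1
      | linear_combination ((1:ℝ)/2)*sq3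
      | linear_combination (-(1:ℝ)/2)*sq3
      | linear_combination ((1:ℝ)/4)*sq3
      | linear_combination (-(1:ℝ)/4)*sq3
      | linarith [sq3, s3pos]) (by
      norm_num
      try first
      | ring1
      | linear_combination ((1:ℝ)/2)*sq3
      | linear_combination (-(1:ℝ)/2)*sq3
      | linear_combination ((1:ℝ)/4)*sq3
      | linear_combination (-(1:ℝ)/4)*sq3
      | linarith [sq3, s3pos])]
  rw [show rot v2 = v3 by
    rw [v2, v3, rot_pt]
    exact pt_congr (by
      norm_num
      try first
      | ring1
      | linear_combination ((1:ℝ)/2)*sq3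
      | linear_combination (-(1:ℝ)/2)*sq3
      | linear_combination ((1:ℝ)/4)*sq3
      | linear_combination (-(1:ℝ)/4)*sq3
      | linarith [sq3, s3pos]) (by
      norm_num
      try first
      | ring1
      | linear_combination ((1:ℝ)/2)*sq3
      | linear_combination (-(1:ℝ)/2)*sq3
      | linear_combination ((1:ℝ)/4)*sq3
      | linear_combination (-(1:ℝ)/4)*sq3
      | linarith [sq3, s3pos])]

lemma rot_P3 : rot '' P3 = P1 := by
  rw [P3_eq, P1_eq, rot_hull]
  congr 1
  rw [Set.image_insert_eq, Set.image_insert_eq, Set.image_insert_eq, Set.image_singleton]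
  rw [show rot 0 = 0 from rot.map_zero]
  rw [show rot u3 = u1 by
    rw [u3, u1, rot_pt]
    exact pt_congr (by
      norm_num
      try first
      | ring1
      | linear_combination ((1:ℝ)/2)*sq3
      | linear_combination (-(1:ℝ)/2)*sq3
      | linear_combination ((1:ℝ)/4)*sq3
      | linear_combination (-(1:ℝ)/4)*sq3
      | linarith [sq3, s3pos]) (by
      norm_num
      try first
      | ring1
      | linear_combination ((1:ℝ)/2)*sq3
      | linear_combination (-(1:ℝ)/2)*sq3
      | linear_combination ((1:ℝ)/4)*sq3
      | linear_combination (-(1:ℝ)/4)*sq3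
      | linarith [sq3, s3pos])]
  rw [show rot (u3 + v3) = u1 + v1 by
    rw [u3, v3, u1, v1, pt_add, pt_add, rot_pt]
    exact pt_congr (by
      norm_num
      try first
      | ring1
      | linear_combination ((1:ℝ)/2)*sq3
      | linear_combination (-(1:ℝ)/2)*sq3
      | linear_combination ((1:ℝ)/4)*sq3
      | linear_combination (-(1:ℝ)/4)*sq3
      | linarith [sq3, s3pos]) (by
      norm_num
      try first
      | ring1
      | linear_combination ((1:ℝ)/2)*sq3
      | linear_combination (-(1:ℝ)/2)*sq3
      | linear_combination ((1:ℝ)/4)*sq3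
      | linear_combination (-(1:ℝ)/4)*sq3
      | linarith [sq3, s3pos])]
  rw [show rot v3 = v1 by
    rw [v3, v1, rot_pt]; exact pt_congr (by
      norm_num
      try first
      | ring1
      | linear_combination ((1:ℝ)/2)*sq3
      | linear_combination (-(1:ℝ)/2)*sq3
      | linear_combination ((1:ℝ)/4)*sq3
      | linear_combination (-(1:ℝ)/4)*sq3
      | linarith [sq3, s3pos]) (by
      norm_num
      try first
      | ring1
      | linear_combination ((1:ℝ)/2)*sq3
      | linear_combination (-(1:ℝ)/2)*sq3
      | linear_combination ((1:ℝ)/4)*sq3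
      | linear_combination (-(1:ℝ)/4)*sq3
      | linarith [sq3, s3pos])]

/-! ### Measure-theoretic lemmas -/

lemma smul_prod_meas {α β : Type*} [MeasurableSpace α] [MeasurableSpace β]
    (c : ℝ≥0∞) (μ : Measure α) (ν : Measure β) [SFinite μ] [SFinite ν] :
    (c • μ).prod ν = c • (μ.prod ν) := by
  ext s hs
  rw [Measure.smul_apply, Measure.prod_apply hs, Measure.prod_apply hs,
    MeasureTheory.lintegral_smul_measure]

lemma prod_smul_meas {α β : Type*} [MeasurableSpace α] [MeasurableSpace β]
    (c : ℝ≥0∞) (hc : c ≠ ⊤) (μ : Measure α) (ν : Measure β)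
    [SFinite μ] [SFinite ν] : μ.prod (c • ν) = c • (μ.prod ν) := by
  ext s hs
  rw [Measure.smul_apply, Measure.prod_apply hs, Measure.prod_apply hs]
  rw [smul_eq_mul, ← MeasureTheory.lintegral_const_mul' _ _ hc]
  simp

lemma rot_mp : MeasurePreserving rot volume volume :=
  LinearIsometryEquiv.measurePreserving rot

lemma rot_image_measurable {K : Set E2} (hK : MeasurableSet K) :
    MeasurableSet (rot '' K) := by
  rw [show rot '' K = rot.symm ⁻¹' K from
    (Equiv.image_eq_preimage_symm rot.toEquiv K).trans rfl]
  exact hK.preimage rot.symm.continuous.measurable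

lemma map_restrict {K : Set E2} (hK : MeasurableSet K) :
    Measure.map rot (volume.restrict K) = volume.restrict (rot '' K) := by
  ext s hs
  rw [Measure.map_apply rot.continuous.measurable hs,
    Measure.restrict_apply (hs.preimage rot.continuous.measurable),
    Measure.restrict_apply hs]
  have h1 : rot ⁻¹' s ∩ K = rot ⁻¹' (s ∩ rot '' K) := by
    rw [Set.preimage_inter]
    congr 1
    exact (Set.preimage_image_eq K rot.injective).symm
  rw [h1]
  exact rot_mp.measure_preimage ((hs.inter (rot_image_measurable hK)).nullMeasurableSet)

lemma vol_image {K : Set E2} (hK : MeasurableSet K) :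
    volume (rot '' K) = volume K := by
  have := congrArg (fun μ : Measure E2 => μ Set.univ) (map_restrict hK)
  simpa [Measure.map_apply rot.continuous.measurable MeasurableSet.univ] using this.symm

lemma distSet_measurable (d : ℝ) :
    MeasurableSet {p : E2 × E2 | dist p.1 p.2 ≤ d} :=
  (isClosed_le continuous_dist continuous_const).measurableSet

lemma pair_rot (μ ν : Measure E2) [SFinite μ] [SFinite ν] (d : ℝ) :
    ((Measure.map rot μ).prod (Measure.map rot ν)) {p : E2 × E2 | dist p.1 p.2 ≤ d}
      = (μ.prod ν) {p : E2 × E2 | dist p.1 p.2 ≤ d} := by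
  rw [Measure.map_prod_map _ _ rot.continuous.measurable rot.continuous.measurable,
    Measure.map_apply (rot.continuous.measurable.prodMap rot.continuous.measurable)
      (distSet_measurable d)]
  congr 1
  ext p
  simp [Prod.map, rot.dist_map]

lemma pair_swap (μ ν : Measure E2) [SFinite μ] [SFinite ν] (d : ℝ) :
    (ν.prod μ) {p : E2 × E2 | dist p.1 p.2 ≤ d}
      = (μ.prod ν) {p : E2 × E2 | dist p.1 p.2 ≤ d} := by
  rw [← Measure.prod_swap, Measure.map_apply measurable_swap (distSet_measurable d)]
  congr 1
  ext p
  simp [Prod.swap, dist_comm]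

/-! ### Measurability, volumes -/

lemma isCompact_P1 : IsCompact P1 := by
  rw [P1]
  apply Set.Finite.isCompact_convexHull
  exact (Set.finite_singleton _).insert _ |>.insert _ |>.insert _

lemma isCompact_P2 : IsCompact P2 := by
  rw [P2]
  apply Set.Finite.isCompact_convexHull
  exact (Set.finite_singleton _).insert _ |>.insert _ |>.insert _

lemma isCompact_P3 : IsCompact P3 := by
  rw [P3]
  apply Set.Finite.isCompact_convexHull
  exact (Set.finite_singleton _).insert _ |>.insert _ |>.insert _

lemma measP1 : MeasurableSet P1 := isCompact_P1.isClosed.measurableSet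
lemma measP2 : MeasurableSet P2 := isCompact_P2.isClosed.measurableSet
lemma measP3 : MeasurableSet P3 := isCompact_P3.isClosed.measurableSet

lemma volP2 : volume P2 = volume P1 := by rw [← rot_P1, vol_image measP1]
lemma volP3 : volume P3 = volume P1 := by
  rw [← rot_P2, vol_image measP2, volP2]

lemma volP1_ne_top : volume P1 ≠ ⊤ := isCompact_P1.measure_lt_top.ne

lemma volP1_pos : volume P1 ≠ 0 := by
  have hopen : IsOpen {x : E2 | 0 < x 1 ∧ x 1 < sqrt 3/2 ∧ 0 < sqrt 3 * x 0 + x 1 ∧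
      sqrt 3 * x 0 + x 1 < sqrt 3} := by
    have h0 : Continuous fun x : E2 => x 0 :=
      (continuous_apply (0 : Fin 2)).comp (PiLp.continuous_ofLp 2 _)
    have h1 : Continuous fun x : E2 => x 1 :=
      (continuous_apply (1 : Fin 2)).comp (PiLp.continuous_ofLp 2 _)
    have hf : Continuous fun x : E2 => sqrt 3 * x 0 + x 1 :=
      (continuous_const.mul h0).add h1
    have : {x : E2 | 0 < x 1 ∧ x 1 < sqrt 3/2 ∧ 0 < sqrt 3 * x 0 + x 1 ∧
        sqrt 3 * x 0 + x 1 < sqrt 3} =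
        ({x : E2 | 0 < x 1} ∩ {x : E2 | x 1 < sqrt 3/2}) ∩
        ({x : E2 | 0 < sqrt 3 * x 0 + x 1} ∩ {x : E2 | sqrt 3 * x 0 + x 1 < sqrt 3}) := by
      ext x; simp [Set.mem_setOf_eq, and_assoc]
    rw [this]
    exact ((isOpen_lt continuous_const h1).inter (isOpen_lt h1 continuous_const)).inter
      ((isOpen_lt continuous_const hf).inter (isOpen_lt hf continuous_const))
  have hsub : {x : E2 | 0 < x 1 ∧ x 1 < sqrt 3/2 ∧ 0 < sqrt 3 * x 0 + x 1 ∧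
      sqrt 3 * x 0 + x 1 < sqrt 3} ⊆ P1 := by
    rintro x ⟨a1, a2, a3, a4⟩
    exact memP1 a1.le a2.le a3.le a4.le
  have hne : {x : E2 | 0 < x 1 ∧ x 1 < sqrt 3/2 ∧ 0 < sqrt 3 * x 0 + x 1 ∧
      sqrt 3 * x 0 + x 1 < sqrt 3}.Nonempty := by
    refine ⟨pt 0 (sqrt 3/4), ?_⟩
    have := s3pos
    simp only [Set.mem_setOf_eq, pt_apply_zero, pt_apply_one]
    constructor; · linarith
    constructor; · linarith
    constructor; · linarith
    linarith
  have := (hopen.measure_pos volume hne).trans_le (measure_mono hsub)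
  exact this.ne'

/-! ### Null overlaps and the restriction decomposition -/

lemma null12 : volume (P1 ∩ P2) = 0 := by
  have h1 : P1 ⊆ {x : E2 | -(sqrt 3) * x 0 + (-1) * x 1 ≤ 0} := by
    rw [P1]
    apply hull_le
    rintro z (rfl|rfl|rfl|rfl) <;>
      simp only [pt, Matrix.cons_val_zero, Matrix.cons_val_one, Matrix.head_cons, WithLp.ofLp_toLp] <;>
      nlinarith [s3pos]
  have h2 : P2 ⊆ {x : E2 | sqrt 3 * x 0 + 1 * x 1 ≤ 0} := by
    rw [P2]
    apply hull_le
    rintro z (rfl|rfl|rfl|rfl) <;>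
      simp only [pt, Matrix.cons_val_zero, Matrix.cons_val_one, Matrix.head_cons, WithLp.ofLp_toLp] <;>
      nlinarith [s3pos]
  refine measure_mono_null ?_ (null_line (sqrt 3) 1 (by nlinarith [sq3]))
  rintro x ⟨hx1, hx2⟩
  have := h1 hx1; have := h2 hx2
  simp only [Set.mem_setOf_eq] at *
  linarith

lemma null13 : volume (P1 ∩ P3) = 0 := by
  have h1 : P1 ⊆ {x : E2 | 0 * x 0 + (-1) * x 1 ≤ 0} := by
    rw [P1]
    apply hull_le
    rintro z (rfl|rfl|rfl|rfl) <;>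
      simp only [pt, Matrix.cons_val_zero, Matrix.cons_val_one, Matrix.head_cons, WithLp.ofLp_toLp] <;>
      nlinarith [s3pos]
  have h2 : P3 ⊆ {x : E2 | 0 * x 0 + 1 * x 1 ≤ 0} := by
    rw [P3]
    apply hull_le
    rintro z (rfl|rfl|rfl|rfl) <;>
      simp only [pt, Matrix.cons_val_zero, Matrix.cons_val_one, Matrix.head_cons, WithLp.ofLp_toLp] <;>
      nlinarith [s3pos]
  refine measure_mono_null ?_ (null_line 0 1 (by norm_num))
  rintro x ⟨hx1, hx2⟩
  have := h1 hx1; have := h2 hx2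
  simp only [Set.mem_setOf_eq] at *
  linarith

lemma null23 : volume (P2 ∩ P3) = 0 := by
  have h1 : P2 ⊆ {x : E2 | sqrt 3 * x 0 + (-1) * x 1 ≤ 0} := by
    rw [P2]
    apply hull_le
    rintro z (rfl|rfl|rfl|rfl) <;>
      simp only [pt, Matrix.cons_val_zero, Matrix.cons_val_one, Matrix.head_cons, WithLp.ofLp_toLp] <;>
      nlinarith [s3pos]
  have h2 : P3 ⊆ {x : E2 | -(sqrt 3) * x 0 + 1 * x 1 ≤ 0} := by
    rw [P3]
    apply hull_le
    rintro z (rfl|rfl|rfl|rfl) <;>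
      simp only [pt, Matrix.cons_val_zero, Matrix.cons_val_one, Matrix.head_cons, WithLp.ofLp_toLp] <;>
      nlinarith [s3pos]
  refine measure_mono_null ?_ (null_line (sqrt 3) (-1) (by nlinarith [sq3]))
  rintro x ⟨hx1, hx2⟩
  have := h1 hx1; have := h2 hx2
  simp only [Set.mem_setOf_eq] at *
  linarith

lemma restrict_decomp : volume.restrict hexa =
    volume.restrict P1 + volume.restrict P2 + volume.restrict P3 := by
  rw [hexa_union, Set.union_assoc,
    Measure.restrict_union₀ (t := P2 ∪ P3) ?had ?hnm,
    Measure.restrict_union₀ (t := P3) null23 measP3.nullMeasurableSet, add_assoc]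
  case had =>
    exact MeasureTheory.AEDisjoint.union_right null12 null13
  case hnm =>
    exact (measP2.union measP3).nullMeasurableSet

lemma vol_hexa : volume hexa = 3 * volume P1 := by
  have := congrArg (fun μ : Measure E2 => μ Set.univ) restrict_decomp
  simp only [Measure.add_apply, Measure.restrict_apply MeasurableSet.univ,
    Set.univ_inter] at this
  rw [this, volP2, volP3]
  ring

/-! ### Main theorem -/

/-- Mixture identity: the CDF of the distance between two uniform points of the unit
hexagon is the (1/3, 2/3)-mixture of the within-rhombus and adjacent-rhombus CDFs. -/
theorem stmt4 :
    ∀ d : ℝ,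
      ((unif hexa).prod (unif hexa)) {p : E2 × E2 | dist p.1 p.2 ≤ d} =
        (1/3 : ℝ≥0∞) * ((unif P1).prod (unif P1)) {p : E2 × E2 | dist p.1 p.2 ≤ d}
          + (2/3 : ℝ≥0∞) * ((unif P1).prod (unif P2)) {p : E2 × E2 | dist p.1 p.2 ≤ d} := by
  intro d
  set D := {p : E2 × E2 | dist p.1 p.2 ≤ d} with hD
  set R1 := volume.restrict P1 with hR1
  set R2 := volume.restrict P2 with hR2
  set R3 := volume.restrict P3 with hR3
  set v := volume P1 with hv
  -- map facts
  have hm1 : Measure.map rot R1 = R2 := by rw [hR1, hR2, map_restrict measP1, rot_P1]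
  have hm2 : Measure.map rot R2 = R3 := by rw [hR2, hR3, map_restrict measP2, rot_P2]
  have hm3 : Measure.map rot R3 = R1 := by rw [hR3, hR1, map_restrict measP3, rot_P3]
  -- the nine pair values
  haveI : SFinite R1 := by rw [hR1]; infer_instance
  haveI : SFinite R2 := by rw [hR2]; infer_instance
  haveI : SFinite R3 := by rw [hR3]; infer_instance
  have hq22 : (R2.prod R2) D = (R1.prod R1) D := by
    conv_lhs => rw [← hm1]
    exact pair_rot R1 R1 d
  have hq33 : (R3.prod R3) D = (R1.prod R1) D := by
    conv_lhs => rw [← hm2]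
    rw [pair_rot R2 R2 d]; exact hq22
  have hq23 : (R2.prod R3) D = (R1.prod R2) D := by
    conv_lhs => rw [← hm1, ← hm2]
    exact pair_rot R1 R2 d
  have hq31 : (R3.prod R1) D = (R1.prod R2) D := by
    conv_lhs => rw [← hm2, ← hm3]
    rw [pair_rot R2 R3 d]; exact hq23
  have hq21 : (R2.prod R1) D = (R1.prod R2) D := pair_swap R1 R2 d
  have hq13 : (R1.prod R3) D = (R1.prod R2) D := (pair_swap R3 R1 d).trans hq31
  have hq32 : (R3.prod R2) D = (R1.prod R2) D := (pair_swap R2 R3 d).trans hq23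
  -- decomposition of the hexagon measure
  have hu : unif hexa = (3 * v)⁻¹ • (R1 + R2 + R3) := by
    rw [unif, vol_hexa, restrict_decomp, ← hv, ← hR1, ← hR2, ← hR3]
  have hvne : v ≠ 0 := volP1_pos
  have hvtop : v ≠ ⊤ := volP1_ne_top
  have hcne : ((3 : ℝ≥0∞) * v)⁻¹ ≠ ⊤ :=
    ENNReal.inv_ne_top.2 (mul_ne_zero (by norm_num) hvne)
  have hwne : (v : ℝ≥0∞)⁻¹ ≠ ⊤ := ENNReal.inv_ne_top.2 hvne
  -- LHS
  have hlhs : ((unif hexa).prod (unif hexa)) D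
      = ((3*v)⁻¹ * (3*v)⁻¹) * (((R1 + R2 + R3).prod (R1 + R2 + R3)) D) := by
    rw [hu, smul_prod_meas, prod_smul_meas _ hcne, smul_smul, Measure.smul_apply,
      smul_eq_mul]
  have hsum : ((R1 + R2 + R3).prod (R1 + R2 + R3)) D
      = 3 * (R1.prod R1) D + 6 * (R1.prod R2) D := by
    simp only [Measure.prod_add, Measure.add_prod, Measure.add_apply]
    rw [hq22, hq33, hq23, hq31, hq21, hq13, hq32]
    ring
  -- RHS pieces
  have hp11 : ((unif P1).prod (unif P1)) D = (v⁻¹ * v⁻¹) * (R1.prod R1) D := by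
    rw [unif, ← hv, ← hR1, smul_prod_meas, prod_smul_meas _ hwne, smul_smul,
      Measure.smul_apply, smul_eq_mul]
  have hp12 : ((unif P1).prod (unif P2)) D = (v⁻¹ * v⁻¹) * (R1.prod R2) D := by
    rw [unif, unif, volP2, ← hv, ← hR1, ← hR2, smul_prod_meas, prod_smul_meas _ hwne,
      smul_smul, Measure.smul_apply, smul_eq_mul]
  rw [hlhs, hsum, hp11, hp12]
  -- arithmetic in ℝ≥0∞
  rw [ENNReal.mul_inv (Or.inl (by norm_num : (3:ℝ≥0∞) ≠ 0))
    (Or.inl (by norm_num : (3:ℝ≥0∞) ≠ ⊤))]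
  have h3 : (3:ℝ≥0∞) * 3⁻¹ = 1 := ENNReal.mul_inv_cancel (by norm_num) (by norm_num)
  have h13 : (1/3 : ℝ≥0∞) = 3⁻¹ := by rw [one_div]
  have h23 : (2/3 : ℝ≥0∞) = 2 * 3⁻¹ := by rw [div_eq_mul_inv]
  rw [h13, h23]
  have key : ((3:ℝ≥0∞)⁻¹ * v⁻¹) * (3⁻¹ * v⁻¹) * (3 * (R1.prod R1) D + 6 * (R1.prod R2) D)
      = (3 * 3⁻¹) * (3⁻¹ * ((v⁻¹ * v⁻¹) * (R1.prod R1) D))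
        + (3 * 3⁻¹) * (2 * (3⁻¹ * ((v⁻¹ * v⁻¹) * (R1.prod R2) D))) := by ring
  rw [key, h3, one_mul, one_mul]
  ring
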